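/- arXiv:1608.04544 — 4 statements merged into one kernel-verified Lean document; each statement's English description precedes it below -/
import Mathlib

section
/- NFL holds for a problem distribution P if and only if for every pair of optimisers a, b and every result vector R ∈ Y^n one has P_a(R) = P_b(R). -/
namespace NFL

/-- A (deterministic) optimiser on search space `Fin n` and range `Y`:
it assigns to every trace (list of pairs with pairwise distinct first
components) of length `< n` a next, unvisited search point. -/
structure Optimiser (n : ℕ) (Y : Type*) where
  next : List (Fin n × Y) → Fin n
  valid : ∀ T : List (Fin n × Y), T.length < n → (T.map Prod.fst).Nodup →
    next T ∉ T.map Prod.fst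

variable {n : ℕ} {Y : Type*}

/-- The trace generated after `k` steps by running optimiser `a`
on target function `f`, starting from the empty trace. -/
def runFrom (a : Optimiser n Y) (f : Fin n → Y) : ℕ → List (Fin n × Y)
  | 0 => []
  | k + 1 =>
      runFrom a f k ++ [(a.next (runFrom a f k), f (a.next (runFrom a f k)))]

/-- The result vector `T^y(a,f)`: its `i`-th entry (0-indexed) is the value
observed at step `i+1`, i.e. `f` applied to the point probed after `i` steps. -/
def resVec (a : Optimiser n Y) (f : Fin n → Y) (i : Fin n) : Y :=
  f (a.next (runFrom a f (i : ℕ)))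

/-- A problem distribution: a probability distribution on `Y^X`. -/
def IsProbDist [Fintype Y] (P : (Fin n → Y) → ℝ) : Prop :=
  (∀ f, 0 ≤ P f) ∧ ∑ f, P f = 1

/-- `P_a(R)`: the probability that optimiser `a` produces result vector `R`. -/
def resProb [Fintype Y] [DecidableEq Y] (P : (Fin n → Y) → ℝ)
    (a : Optimiser n Y) (R : Fin n → Y) : ℝ :=
  ∑ f ∈ Finset.univ.filter (fun f => resVec a f = R), P f

/-- Expected performance `M^P(a)` of optimiser `a` under distribution `P`
and performance measure `M`. -/
def perf [Fintype Y] (P : (Fin n → Y) → ℝ) (M : (Fin n → Y) → ℝ)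
    (a : Optimiser n Y) : ℝ :=
  ∑ f, P f * M (resVec a f)

/-- NFL holds for `P`: all optimisers have the same expected performance
under every (nonnegative) performance measure. -/
def NFLholds [Fintype Y] (P : (Fin n → Y) → ℝ) : Prop :=
  ∀ M : (Fin n → Y) → ℝ, (∀ R, 0 ≤ M R) →
    ∀ a b : Optimiser n Y, perf P M a = perf P M b

/-- The histogram of `f`: `h_f(y) = |f⁻¹(y)|`. -/
def histogram [DecidableEq Y] (f : Fin n → Y) (y : Y) : ℕ :=
  (Finset.univ.filter fun x => f x = y).card

/-- `P` is block uniform: functions with equal histograms get equal probability. -/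
def BlockUniform [DecidableEq Y] (P : (Fin n → Y) → ℝ) : Prop :=
  ∀ f g : Fin n → Y, histogram f = histogram g → P f = P g

/-- `F` is closed under permutation: `f ∈ F` implies `σf ∈ F`,
where `(σf)(x) = f(σ⁻¹(x))`. -/
def Cup [Fintype Y] [DecidableEq Y] (F : Finset (Fin n → Y)) : Prop :=
  ∀ f ∈ F, ∀ σ : Equiv.Perm (Fin n), (f ∘ σ.symm) ∈ F

/-- The uniform distribution on a class `F`. -/
noncomputable def uniformOn [Fintype Y] [DecidableEq Y] (F : Finset (Fin n → Y))
    (f : Fin n → Y) : ℝ :=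
  if f ∈ F then 1 / F.card else 0

/-- An optimiser is non-adaptive if it probes the points of `X` in a fixed
order, regardless of the observed values. -/
def NonAdaptive (a : Optimiser n Y) : Prop :=
  ∃ ord : Fin n → Fin n,
    ∀ (f : Fin n → Y) (i : Fin n), a.next (runFrom a f (i : ℕ)) = ord i

/-- Optimisation time `M_ptm(R)`: the least index `i` (counting from 1) with
`R[i] = yMax`, with the convention `M_ptm(R) = n` if no such index exists. -/
def mptm [DecidableEq Y] (yMax : Y) (R : Fin n → Y) : ℕ :=
  if h : ∃ i, R i = yMax then
    ((Finset.univ.filter fun i => R i = yMax).min'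
      ⟨h.choose, Finset.mem_filter.mpr ⟨Finset.mem_univ _, h.choose_spec⟩⟩).val + 1
  else n

theorem nfl_iff_resProb_eq {n : ℕ} {Y : Type*} [Fintype Y] [DecidableEq Y]
    (hn : 1 ≤ n) (hY : 2 ≤ Fintype.card Y)
    (P : (Fin n → Y) → ℝ) (hP : IsProbDist P) :
    NFLholds P ↔
      ∀ (a b : Optimiser n Y) (R : Fin n → Y), resProb P a R = resProb P b R := by
  constructor
  · intro h a b R
    have key : ∀ c : Optimiser n Y,
        perf P (fun S => if S = R then 1 else 0) c = resProb P c R := by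
      intro c
      unfold perf resProb
      rw [Finset.sum_filter]
      apply Finset.sum_congr rfl
      intro f _
      by_cases hf : resVec c f = R <;> simp [hf]
    have := h (fun S => if S = R then 1 else 0)
      (fun S => by by_cases hS : S = R <;> simp [hS]) a b
    rw [key a, key b] at this
    exact this
  · intro h M _ a b
    have key : ∀ c : Optimiser n Y,
        perf P M c = ∑ R : Fin n → Y, resProb P c R * M R := by
      intro c
      unfold perf resProb
      rw [← Finset.sum_fiberwise (g := fun f => resVec c f) (f := fun f => P f * M (resVec c f))]
      apply Finset.sum_congr rfl
      intro R _
      rw [Finset.sum_mul]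
      apply Finset.sum_congr rfl
      intro f hf
      rw [(Finset.mem_filter.mp hf).2]
    rw [key a, key b]
    exact Finset.sum_congr rfl fun R _ => by rw [h a b R]

end NFL
end

section
/- NFL holds for a problem distribution P if and only if P is block uniform. -/
namespace NFL

variable {n : ℕ} {Y : Type*}

section Aux
variable {n : ℕ} {Y : Type*}

lemma runFrom_length (a : Optimiser n Y) (f : Fin n → Y) (k : ℕ) :
    (runFrom a f k).length = k := by
  induction k with
  | zero => rfl
  | succ k ih => simp [runFrom, ih]

lemma runFrom_snd (a : Optimiser n Y) (f : Fin n → Y) (k : ℕ) :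
    ∀ p ∈ runFrom a f k, p.2 = f p.1 := by
  induction k with
  | zero => simp [runFrom]
  | succ k ih =>
    intro p hp
    simp only [runFrom, List.mem_append, List.mem_singleton] at hp
    rcases hp with hp | hp
    · exact ih p hp
    · subst hp; rfl

lemma runFrom_nodup (a : Optimiser n Y) (f : Fin n → Y) :
    ∀ k, k ≤ n → ((runFrom a f k).map Prod.fst).Nodup := by
  intro k
  induction k with
  | zero => intro _; simp [runFrom]
  | succ k ih =>
    intro hk
    have h1 := ih (Nat.le_of_succ_le hk)
    have hlen : (runFrom a f k).length < n := by rw [runFrom_length]; omega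
    have hv := a.valid _ hlen h1
    simp only [runFrom, List.map_append, List.map_cons, List.map_nil]
    rw [List.nodup_append]
    refine ⟨h1, List.nodup_singleton _, ?_⟩
    intro x hx y hy
    rw [List.mem_singleton] at hy
    subst hy
    intro h
    exact hv (h ▸ hx)

lemma runFrom_prefix (a : Optimiser n Y) (f : Fin n → Y) {i j : ℕ} (h : i ≤ j) :
    runFrom a f i <+: runFrom a f j := by
  induction j with
  | zero => simp at h; subst h; exact List.prefix_refl _
  | succ j ih =>
    rcases Nat.lt_or_ge i (j+1) with h' | h'
    · exact (ih (Nat.lt_succ_iff.mp h')).trans ⟨_, rfl⟩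
    · have : i = j + 1 := le_antisymm h h'
      subst this; exact List.prefix_refl _

lemma next_mem (a : Optimiser n Y) (f : Fin n → Y) {i j : ℕ} (h : i < j) :
    a.next (runFrom a f i) ∈ (runFrom a f j).map Prod.fst := by
  have hpre := (runFrom_prefix a f h).map Prod.fst
  apply hpre.subset
  simp [runFrom]

lemma probe_inj (a : Optimiser n Y) (f : Fin n → Y) :
    Function.Injective (fun i : Fin n => a.next (runFrom a f (i : ℕ))) := by
  intro i j hij
  by_contra hne
  have key : ∀ i j : Fin n, (i : ℕ) < (j : ℕ) →
      a.next (runFrom a f (i : ℕ)) = a.next (runFrom a f (j : ℕ)) → False := by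
    intro i j hlt heq
    have hmem := next_mem a f hlt
    rw [heq] at hmem
    have hlen : (runFrom a f (j : ℕ)).length < n := by rw [runFrom_length]; exact j.isLt
    exact a.valid _ hlen (runFrom_nodup a f _ (le_of_lt j.isLt)) hmem
  rcases lt_trichotomy (i : ℕ) (j : ℕ) with h | h | h
  · exact key i j h hij
  · exact hne (Fin.ext h)
  · exact key j i h hij.symm

/-- The probing order of optimiser `a` on `f`, as a permutation. -/
noncomputable def probePerm (a : Optimiser n Y) (f : Fin n → Y) : Equiv.Perm (Fin n) :=
  Equiv.ofBijective _ ((Finite.injective_iff_bijective).mp (probe_inj a f))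

lemma resVec_eq_comp (a : Optimiser n Y) (f : Fin n → Y) :
    resVec a f = f ∘ (probePerm a f) := rfl

lemma histogram_comp_equiv [DecidableEq Y] (f : Fin n → Y) (e : Equiv.Perm (Fin n)) :
    histogram (f ∘ e) = histogram f := by
  funext y
  unfold histogram
  apply Finset.card_bij' (fun x _ => e x) (fun x _ => e.symm x) <;>
    simp [Function.comp]

lemma resVec_injective (a : Optimiser n Y) : Function.Injective (resVec a) := by
  intro f g h
  have key : ∀ k, k ≤ n → runFrom a f k = runFrom a g k := by
    intro k
    induction k with
    | zero => intro _; rfl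
    | succ k ih =>
      intro hk
      have hT := ih (Nat.le_of_succ_le hk)
      have hkn : k < n := hk
      have hval : f (a.next (runFrom a f k)) = g (a.next (runFrom a g k)) := by
        have := congrFun h ⟨k, hkn⟩
        simpa [resVec] using this
      rw [hT] at hval
      simp only [runFrom, hT]
      rw [hval]
  funext x
  have hnodup := runFrom_nodup a f n le_rfl
  have hx : x ∈ (runFrom a f n).map Prod.fst := by
    have hfin : ((runFrom a f n).map Prod.fst).toFinset = Finset.univ := by
      apply Finset.eq_univ_of_card
      rw [List.toFinset_card_of_nodup hnodup, List.length_map, runFrom_length]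
      simp
    rw [← List.mem_toFinset, hfin]
    exact Finset.mem_univ x
  rcases List.mem_map.mp hx with ⟨p, hp, hpx⟩
  have h1 := runFrom_snd a f n p hp
  have hp' : p ∈ runFrom a g n := by rw [← key n le_rfl]; exact hp
  have h2 := runFrom_snd a g n p hp'
  rw [← hpx, ← h1, ← h2]


/-- Next-point function probing in the order given by `σ`. -/
def nextFun (hn : 0 < n) (σ : Equiv.Perm (Fin n)) (T : List (Fin n × Y)) : Fin n :=
  if h : T.length < n then
    if σ ⟨T.length, h⟩ ∈ Finset.univ \ (T.map Prod.fst).toFinset then σ ⟨T.length, h⟩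
    else if hs : (Finset.univ \ (T.map Prod.fst).toFinset).Nonempty then
      (Finset.univ \ (T.map Prod.fst).toFinset).min' hs
    else ⟨0, hn⟩
  else ⟨0, hn⟩

lemma sdiff_nonempty_of (T : List (Fin n × Y)) (hT : T.length < n)
    (hnd : (T.map Prod.fst).Nodup) :
    (Finset.univ \ (T.map Prod.fst).toFinset).Nonempty := by
  rw [Finset.sdiff_nonempty]
  intro hsub
  have hc := Finset.card_le_card hsub
  rw [List.toFinset_card_of_nodup hnd, List.length_map] at hc
  simp only [Finset.card_univ, Fintype.card_fin] at hc
  omega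

/-- The non-adaptive optimiser probing in the order `σ 0, σ 1, …`. -/
def mkOpt (hn : 0 < n) (σ : Equiv.Perm (Fin n)) : Optimiser n Y where
  next := nextFun hn σ
  valid := by
    intro T hT hnd
    have hs := sdiff_nonempty_of T hT hnd
    unfold nextFun
    rw [dif_pos hT, dif_pos hs]
    split
    · next hmem =>
      simp only [Finset.mem_sdiff, List.mem_toFinset] at hmem
      exact hmem.2
    · next hmem =>
      have := Finset.min'_mem _ hs
      simp only [Finset.mem_sdiff, List.mem_toFinset] at this
      exact this.2

lemma nextFun_eq (hn : 0 < n) (σ : Equiv.Perm (Fin n)) (T : List (Fin n × Y))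
    (k : ℕ) (hkn : k < n) (hTk : T.length = k)
    (hmem : σ ⟨k, hkn⟩ ∉ T.map Prod.fst) : nextFun hn σ T = σ ⟨k, hkn⟩ := by
  subst hTk
  unfold nextFun
  rw [dif_pos hkn, if_pos]
  simp only [Finset.mem_sdiff, Finset.mem_univ, List.mem_toFinset, true_and]
  exact hmem

lemma mkOpt_mem (hn : 0 < n) (σ : Equiv.Perm (Fin n)) (f : Fin n → Y) :
    ∀ k, k ≤ n → ∀ x : Fin n,
      (x ∈ (runFrom (mkOpt hn σ) f k).map Prod.fst ↔ ((σ.symm x : Fin n) : ℕ) < k) := by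
  intro k
  induction k with
  | zero => intro _ x; simp [runFrom]
  | succ k ih =>
    intro hk x
    have hkn : k < n := hk
    have ihk := ih (Nat.le_of_succ_le hk)
    have hnotmem : σ ⟨k, hkn⟩ ∉ (runFrom (mkOpt hn σ) f k).map Prod.fst := by
      rw [ihk]; simp
    have hnext : (mkOpt hn σ).next (runFrom (mkOpt hn σ) f k) = σ ⟨k, hkn⟩ :=
      nextFun_eq hn σ _ k hkn (runFrom_length _ _ _) hnotmem
    rw [runFrom]
    simp only [List.map_append, List.map_cons, List.map_nil, List.mem_append,
      List.mem_singleton, hnext, ihk]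
    rw [Nat.lt_succ_iff_lt_or_eq]
    apply or_congr Iff.rfl
    constructor
    · intro h; subst h; simp
    · intro h
      have h2 : σ.symm x = ⟨k, hkn⟩ := Fin.ext h
      have := congrArg σ h2
      simpa using this

lemma mkOpt_next (hn : 0 < n) (σ : Equiv.Perm (Fin n)) (f : Fin n → Y)
    (k : ℕ) (hkn : k < n) :
    (mkOpt hn σ).next (runFrom (mkOpt hn σ) f k) = σ ⟨k, hkn⟩ := by
  apply nextFun_eq hn σ _ k hkn (runFrom_length _ _ _)
  rw [mkOpt_mem hn σ f k (le_of_lt hkn)]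
  simp

lemma mkOpt_resVec (hn : 0 < n) (σ : Equiv.Perm (Fin n)) (f : Fin n → Y) :
    resVec (mkOpt hn σ) f = f ∘ σ := by
  funext i
  show f ((mkOpt hn σ).next (runFrom (mkOpt hn σ) f (i : ℕ))) = f (σ i)
  rw [mkOpt_next hn σ f (i : ℕ) i.isLt]


end Aux

theorem nfl_iff_blockUniform {n : ℕ} {Y : Type*} [Fintype Y] [DecidableEq Y]
    (hn : 1 ≤ n) (hY : 2 ≤ Fintype.card Y)
    (P : (Fin n → Y) → ℝ) (hP : IsProbDist P) :
    NFLholds P ↔ BlockUniform P := by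
  have hn0 : 0 < n := hn
  constructor
  · -- NFL → BlockUniform
    intro hNFL f g hhist
    have hcard : ∀ y : Y, Fintype.card {x // f x = y} = Fintype.card {x // g x = y} := by
      intro y
      rw [Fintype.card_subtype, Fintype.card_subtype]
      exact congrFun hhist y
    let e : ∀ y : Y, {x // f x = y} ≃ {x // g x = y} := fun y => Fintype.equivOfCardEq (hcard y)
    let σ : Equiv.Perm (Fin n) :=
      ((Equiv.sigmaFiberEquiv f).symm.trans (Equiv.sigmaCongrRight e)).trans
        (Equiv.sigmaFiberEquiv g)
    have hσ : ∀ x, g (σ x) = f x := fun x => ((e (f x)) ⟨x, rfl⟩).2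
    have hgf : g ∘ σ = f := funext hσ
    set M : (Fin n → Y) → ℝ := fun R => if R = f then 1 else 0 with hM
    have hMnn : ∀ R, 0 ≤ M R := by
      intro R; simp only [hM]; split <;> norm_num
    have key := hNFL M hMnn (mkOpt hn0 σ) (mkOpt hn0 1)
    have ha : perf P M (mkOpt hn0 σ) = P g := by
      unfold perf
      have hterm : ∀ h : Fin n → Y,
          P h * M (resVec (mkOpt hn0 σ) h) = if h = g then P h else 0 := by
        intro h
        rw [mkOpt_resVec]
        simp only [hM]
        by_cases hc : h = g
        · subst hc; rw [if_pos hgf, if_pos rfl]; ring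
        · have hne : h ∘ ⇑σ ≠ f := by
            intro hh
            apply hc
            funext x
            have h1 := congrFun hh (σ.symm x)
            have h2 := congrFun hgf (σ.symm x)
            simp only [Function.comp_apply, Equiv.apply_symm_apply] at h1 h2
            rw [h1, ← h2]
          rw [if_neg hne, if_neg hc]; ring
      rw [Finset.sum_congr rfl (fun h _ => hterm h)]
      simp
    have hb : perf P M (mkOpt hn0 1) = P f := by
      unfold perf
      have hterm : ∀ h : Fin n → Y,
          P h * M (resVec (mkOpt hn0 1) h) = if h = f then P h else 0 := by
        intro h
        rw [mkOpt_resVec]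
        have : h ∘ ⇑(1 : Equiv.Perm (Fin n)) = h := by
          funext x; rfl
        rw [this]
        simp only [hM]
        by_cases hc : h = f
        · rw [if_pos hc, if_pos hc]; ring
        · rw [if_neg hc, if_neg hc]; ring
      rw [Finset.sum_congr rfl (fun h _ => hterm h)]
      simp
    rw [ha, hb] at key
    exact key.symm
  · -- BlockUniform → NFL
    intro hBU M hM a b
    have hbij : ∀ c : Optimiser n Y, Function.Bijective (resVec c) :=
      fun c => (Finite.injective_iff_bijective).mp (resVec_injective c)
    have hhist : ∀ (c : Optimiser n Y) (h : Fin n → Y),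
        histogram (resVec c h) = histogram h := by
      intro c h
      rw [resVec_eq_comp]
      exact histogram_comp_equiv h _
    have main : ∀ c : Optimiser n Y, perf P M c =
        ∑ R, P ((Equiv.ofBijective (resVec c) (hbij c)).symm R) * M R := by
      intro c
      unfold perf
      exact Fintype.sum_equiv (Equiv.ofBijective (resVec c) (hbij c)) _ _
        (fun h => by rw [Equiv.symm_apply_apply]; rfl)
    rw [main a, main b]
    apply Finset.sum_congr rfl
    intro R _
    congr 1
    apply hBU
    have h1 : resVec a ((Equiv.ofBijective (resVec a) (hbij a)).symm R) = R :=
      (Equiv.ofBijective (resVec a) (hbij a)).apply_symm_apply R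
    have h2 : resVec b ((Equiv.ofBijective (resVec b) (hbij b)).symm R) = R :=
      (Equiv.ofBijective (resVec b) (hbij b)).apply_symm_apply R
    calc histogram ((Equiv.ofBijective (resVec a) (hbij a)).symm R)
        = histogram R := by rw [← hhist a ((Equiv.ofBijective (resVec a) (hbij a)).symm R), h1]
      _ = histogram ((Equiv.ofBijective (resVec b) (hbij b)).symm R) := by
          rw [← hhist b ((Equiv.ofBijective (resVec b) (hbij b)).symm R), h2]

end NFL
end

section
/- For any two optimisers a and b, the set of result vectors they can produce is the same: {R ∈ Y^n : T^y(a,f) = R for some f ∈ Y^X} = {R ∈ Y^n : T^y(b,f) = R for some f ∈ Y^X}. -/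
namespace NFL

variable {n : ℕ} {Y : Type*}

/-- The trace that optimiser `a` would build if the answers were given
by the sequence `R` (regardless of any target function). -/
def listFor (a : Optimiser n Y) (R : ℕ → Y) : ℕ → List (Fin n × Y)
  | 0 => []
  | k + 1 => listFor a R k ++ [(a.next (listFor a R k), R k)]

lemma listFor_length (a : Optimiser n Y) (R : ℕ → Y) (k : ℕ) :
    (listFor a R k).length = k := by
  induction k with
  | zero => rfl
  | succ k ih => simp [listFor, ih]

lemma listFor_nodup (a : Optimiser n Y) (R : ℕ → Y) :
    ∀ k, k ≤ n → ((listFor a R k).map Prod.fst).Nodup := by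
  intro k
  induction k with
  | zero => simp [listFor]
  | succ k ih =>
    intro hk
    have hnd := ih (Nat.le_of_succ_le hk)
    have hlt : (listFor a R k).length < n := by rw [listFor_length]; omega
    have hv := a.valid _ hlt hnd
    simp [listFor, List.nodup_append, hnd, hv]
    intro b x hb heq
    subst heq
    exact hv (List.mem_map.mpr ⟨(_, x), hb, rfl⟩)

lemma mem_listFor (a : Optimiser n Y) (R : ℕ → Y) {i k : ℕ} (h : i < k) :
    a.next (listFor a R i) ∈ (listFor a R k).map Prod.fst := by
  induction k with
  | zero => omega
  | succ k ih =>
    rcases Nat.lt_succ_iff_lt_or_eq.mp h with h' | h'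
    · simp [listFor, ih h']
    · subst h'; simp [listFor]

lemma next_injective (a : Optimiser n Y) (R : ℕ → Y) :
    Function.Injective (fun i : Fin n => a.next (listFor a R (i : ℕ))) := by
  intro i j hij
  simp only at hij
  rcases lt_trichotomy (i : ℕ) (j : ℕ) with h | h | h
  · exfalso
    have hmem := mem_listFor a R h
    rw [hij] at hmem
    have hlt : (listFor a R (j : ℕ)).length < n := by rw [listFor_length]; exact j.2
    exact a.valid _ hlt (listFor_nodup a R _ (le_of_lt j.2)) hmem
  · exact Fin.ext h
  · exfalso
    have hmem := mem_listFor a R h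
    rw [← hij] at hmem
    have hlt : (listFor a R (i : ℕ)).length < n := by rw [listFor_length]; exact i.2
    exact a.valid _ hlt (listFor_nodup a R _ (le_of_lt i.2)) hmem

lemma resVec_surjective (a : Optimiser n Y) (hn : 1 ≤ n) (R : Fin n → Y) :
    ∃ f : Fin n → Y, resVec a f = R := by
  set R' : ℕ → Y := fun k => if h : k < n then R ⟨k, h⟩ else R ⟨0, hn⟩ with hR'
  set p : Fin n → Fin n := fun i => a.next (listFor a R' (i : ℕ)) with hp
  have hinj : Function.Injective p := next_injective a R'
  let e : Equiv.Perm (Fin n) := Equiv.ofBijective p ((Finite.injective_iff_bijective).mp hinj)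
  refine ⟨fun x => R (e.symm x), ?_⟩
  have hfp : ∀ i : Fin n, R (e.symm (a.next (listFor a R' (i : ℕ)))) = R i := by
    intro i
    have h1 : e.symm (p i) = i := e.symm_apply_apply i
    have h2 : p i = a.next (listFor a R' (i : ℕ)) := rfl
    rw [← h2, h1]
  have hrun : ∀ k, k ≤ n → runFrom a (fun x => R (e.symm x)) k = listFor a R' k := by
    intro k
    induction k with
    | zero => intro _; rfl
    | succ k ih =>
      intro hk
      have hk' : k < n := hk
      have ihk := ih (Nat.le_of_succ_le hk)
      have hval : R (e.symm (a.next (listFor a R' k))) = R' k := by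
        have := hfp ⟨k, hk'⟩
        rw [this, hR']
        simp [hk']
      rw [runFrom, ihk]
      show listFor a R' k ++ [(_, R (e.symm (a.next (listFor a R' k))))] = _
      rw [hval]
      rfl
  funext i
  have hi : (i : ℕ) ≤ n := le_of_lt i.2
  rw [resVec, hrun _ hi]
  exact hfp i

theorem resVec_range_eq {n : ℕ} {Y : Type*} [Fintype Y] [DecidableEq Y]
    (hn : 1 ≤ n) (hY : 2 ≤ Fintype.card Y) (a b : Optimiser n Y) :
    {R : Fin n → Y | ∃ f : Fin n → Y, resVec a f = R} =
      {R : Fin n → Y | ∃ f : Fin n → Y, resVec b f = R} := by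
  ext R
  simp only [Set.mem_setOf_eq]
  exact ⟨fun _ => resVec_surjective b hn R, fun _ => resVec_surjective a hn R⟩

end NFL
end

section
/- If a problem distribution P is not block uniform, then there exist two non-adaptive optimisers e and e' and a result vector R ∈ Y^n such that P_e(R) ≠ P_{e'}(R); consequently there is free lunch for a non-adaptive optimiser under some performance measure. -/
namespace NFL

variable {n : ℕ} {Y : Type*}

section Aux

variable [DecidableEq Y]

/-- The set of indices whose `σ`-image is unvisited in trace `T`. -/
def nextSet (σ : Equiv.Perm (Fin n)) (T : List (Fin n × Y)) : Finset (Fin n) :=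
  Finset.univ.filter (fun m => σ m ∉ T.map Prod.fst)

lemma nextSet_nonempty (σ : Equiv.Perm (Fin n)) {T : List (Fin n × Y)}
    (hT : T.length < n) : (nextSet σ T).Nonempty := by
  by_contra h
  rw [Finset.not_nonempty_iff_eq_empty] at h
  have hall : ∀ x : Fin n, x ∈ T.map Prod.fst := by
    intro x
    have := Finset.eq_empty_iff_forall_notMem.mp h (σ.symm x)
    simp [nextSet] at this
    simpa using this
  have h1 : (Finset.univ : Finset (Fin n)) ⊆ (T.map Prod.fst).toFinset := by
    intro x _; simpa using hall x
  have h2 := Finset.card_le_card h1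
  have h3 := (T.map Prod.fst).toFinset_card_le
  simp at h2 h3
  omega

/-- The non-adaptive optimiser probing points in the order `σ 0, σ 1, ...`. -/
def optOf (hn : 1 ≤ n) (σ : Equiv.Perm (Fin n)) : Optimiser n Y where
  next T := if h : (nextSet σ T).Nonempty then σ ((nextSet σ T).min' h) else ⟨0, hn⟩
  valid T hT _ := by
    have h := nextSet_nonempty σ hT
    simp only [dif_pos h]
    have hm := (nextSet σ T).min'_mem h
    simp only [nextSet, Finset.mem_filter] at hm
    exact hm.2

lemma optOf_mem (hn : 1 ≤ n) (σ : Equiv.Perm (Fin n)) (f : Fin n → Y) :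
    ∀ k, k ≤ n → ∀ i : Fin n,
      (σ i ∈ (runFrom (optOf hn σ) f k).map Prod.fst ↔ (i : ℕ) < k) := by
  intro k
  induction k with
  | zero => intro _ i; simp [runFrom]
  | succ k ih =>
    intro hk i
    have hk' : k < n := hk
    have ihm := ih (le_of_lt hk')
    have hset : nextSet σ (runFrom (optOf hn σ) f k) =
        Finset.univ.filter (fun m : Fin n => k ≤ (m : ℕ)) := by
      ext m
      simp [nextSet, ihm m]
    have hne : (nextSet σ (runFrom (optOf hn σ) f k)).Nonempty :=
      ⟨⟨k, hk'⟩, by simp [hset]⟩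
    have hmin : (nextSet σ (runFrom (optOf hn σ) f k)).min' hne = ⟨k, hk'⟩ := by
      apply le_antisymm
      · apply Finset.min'_le
        simp [hset]
      · apply Finset.le_min'
        intro m hm
        rw [hset] at hm
        simp only [Finset.mem_filter, Finset.mem_univ, true_and] at hm
        rw [Fin.le_def]
        exact hm
    have hnext : (optOf hn σ).next (runFrom (optOf hn σ) f k) = σ ⟨k, hk'⟩ := by
      show (if h : _ then _ else _) = _
      rw [dif_pos hne, hmin]
    rw [runFrom]
    simp [hnext, ihm i, σ.injective.eq_iff, Fin.ext_iff]
    omega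

lemma optOf_next (hn : 1 ≤ n) (σ : Equiv.Perm (Fin n)) (f : Fin n → Y)
    {k : ℕ} (hk : k < n) :
    (optOf hn σ).next (runFrom (optOf hn σ) f k) = σ ⟨k, hk⟩ := by
  have ihm := optOf_mem hn σ f k (le_of_lt hk)
  have hset : nextSet σ (runFrom (optOf hn σ) f k) =
      Finset.univ.filter (fun m : Fin n => k ≤ (m : ℕ)) := by
    ext m
    simp [nextSet, ihm m]
  have hne : (nextSet σ (runFrom (optOf hn σ) f k)).Nonempty :=
    ⟨⟨k, hk⟩, by simp [hset]⟩
  have hmin : (nextSet σ (runFrom (optOf hn σ) f k)).min' hne = ⟨k, hk⟩ := by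
    apply le_antisymm
    · apply Finset.min'_le
      simp [hset]
    · apply Finset.le_min'
      intro m hm
      rw [hset] at hm
      simp only [Finset.mem_filter, Finset.mem_univ, true_and] at hm
      rw [Fin.le_def]
      exact hm
  show (if h : _ then _ else _) = _
  rw [dif_pos hne, hmin]

lemma optOf_nonAdaptive (hn : 1 ≤ n) (σ : Equiv.Perm (Fin n)) :
    NonAdaptive (Y := Y) (optOf hn σ) := by
  refine ⟨σ, fun f i => ?_⟩
  rw [optOf_next hn σ f i.isLt]

lemma resVec_optOf (hn : 1 ≤ n) (σ : Equiv.Perm (Fin n)) (f : Fin n → Y) :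
    resVec (optOf hn σ) f = f ∘ σ := by
  funext i
  rw [resVec, optOf_next hn σ f i.isLt]
  rfl

lemma resProb_optOf [Fintype Y] (hn : 1 ≤ n) (σ : Equiv.Perm (Fin n))
    (P : (Fin n → Y) → ℝ) (R : Fin n → Y) :
    resProb P (optOf hn σ) R = P (R ∘ σ.symm) := by
  rw [resProb]
  have hfil : Finset.univ.filter (fun f => resVec (optOf hn σ) f = R)
      = {R ∘ σ.symm} := by
    ext f
    simp only [Finset.mem_filter, Finset.mem_univ, true_and, Finset.mem_singleton,
      resVec_optOf]
    constructor
    · rintro rfl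
      funext x
      simp [Function.comp]
    · rintro rfl
      funext x
      simp [Function.comp]
  rw [hfil, Finset.sum_singleton]

lemma perf_ind [Fintype Y] (hn : 1 ≤ n) (σ : Equiv.Perm (Fin n))
    (P : (Fin n → Y) → ℝ) (R0 : Fin n → Y) :
    perf P (fun R => if R = R0 then (1 : ℝ) else 0) (optOf hn σ)
      = resProb P (optOf hn σ) R0 := by
  rw [perf, resProb, Finset.sum_filter]
  apply Finset.sum_congr rfl
  intro f _
  by_cases h : resVec (optOf hn σ) f = R0 <;> simp [h]

lemma card_fiber (f : Fin n → Y) (y : Y) :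
    Nat.card (f ⁻¹' {y}) = histogram f y := by
  have h : f ⁻¹' {y} = ↑(Finset.univ.filter fun x => f x = y) := by
    ext x; simp
  rw [h, Nat.card_coe_set_eq, Set.ncard_coe_finset, histogram]

end Aux

theorem not_blockUniform_free_lunch {n : ℕ} {Y : Type*} [Fintype Y] [DecidableEq Y]
    (hn : 1 ≤ n) (hY : 2 ≤ Fintype.card Y)
    (P : (Fin n → Y) → ℝ) (hP : IsProbDist P) (hnbu : ¬ BlockUniform P) :
    ∃ e e' : Optimiser n Y, NonAdaptive e ∧ NonAdaptive e' ∧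
      (∃ R : Fin n → Y, resProb P e R ≠ resProb P e' R) ∧
      ∃ M : (Fin n → Y) → ℝ, (∀ R, 0 ≤ M R) ∧ perf P M e ≠ perf P M e' := by
  rw [BlockUniform] at hnbu
  push_neg at hnbu
  obtain ⟨f, g, hfg, hPfg⟩ := hnbu
  have hfib : ∀ y : Y, Nonempty ((f ⁻¹' {y}) ≃ (g ⁻¹' {y})) := by
    intro y
    apply Finite.card_eq.mp
    rw [card_fiber, card_fiber, hfg]
  have ee : ∀ y : Y, (f ⁻¹' {y}) ≃ (g ⁻¹' {y}) := fun y => (hfib y).some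
  set σ : Equiv.Perm (Fin n) := Equiv.ofFiberEquiv ee with hσdef
  have hσ : ∀ x, g (σ x) = f x := fun x => Equiv.ofFiberEquiv_map ee x
  have hcomp : f ∘ σ.symm = g := by
    funext x
    have := hσ (σ.symm x)
    simp at this
    simp [Function.comp, ← this]
  refine ⟨optOf hn 1, optOf hn σ, optOf_nonAdaptive hn 1, optOf_nonAdaptive hn σ, ?_, ?_⟩
  · refine ⟨f, ?_⟩
    rw [resProb_optOf, resProb_optOf]
    have h1 : f ∘ (1 : Equiv.Perm (Fin n)).symm = f := rfl
    rw [h1, hcomp]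
    exact hPfg
  · refine ⟨fun R => if R = f then (1 : ℝ) else 0, fun R => by positivity, ?_⟩
    rw [perf_ind, perf_ind, resProb_optOf, resProb_optOf]
    have h1 : f ∘ (1 : Equiv.Perm (Fin n)).symm = f := rfl
    rw [h1, hcomp]
    exact hPfg

end NFL
end
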